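/- Let p and q be probability density functions on ℝⁿ. The function D(x) = p(x)/(p(x)+q(x)) (defined where p(x)+q(x)>0) maximizes, over all measurable functions D: ℝⁿ → (0,1), the functional V(D) = ∫ p(x)·log(D(x)) dx + ∫ q(x)·log(1 − D(x)) dx. That is, for any measurable D: ℝⁿ → (0,1), V(D) ≤ V(D*) where D* = p/(p+q). -/

import Mathlib

open MeasureTheory Real

lemma key_log_ineq (a c y : ℝ) (ha : 0 ≤ a) (hc : 0 < c) (hy : 0 < y) :
    a * Real.log y ≤ a * Real.log (a / c) + (y * c - a) := by
  rcases ha.eq_or_lt with h | h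
  · subst h; simp; positivity
  · have hac : 0 < a / c := div_pos h hc
    have hyca : 0 < y * c / a := by positivity
    have hlog : Real.log y = Real.log (a / c) + Real.log (y * c / a) := by
      rw [← Real.log_mul hac.ne' hyca.ne']
      congr 1
      field_simp
    have hle : Real.log (y * c / a) ≤ y * c / a - 1 :=
      Real.log_le_sub_one_of_pos hyca
    have := mul_le_mul_of_nonneg_left hle h.le
    rw [hlog, mul_add]
    have : a * (y * c / a) = y * c := by field_simp
    nlinarith [mul_le_mul_of_nonneg_left hle ha]

lemma pointwise_ineq (a b y : ℝ) (ha : 0 ≤ a) (hb : 0 ≤ b)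
    (hy : y ∈ Set.Ioo (0 : ℝ) 1) :
    a * Real.log y + b * Real.log (1 - y) ≤
      a * Real.log (a / (a + b)) + b * Real.log (1 - a / (a + b)) := by
  obtain ⟨hy0, hy1⟩ := hy
  rcases eq_or_lt_of_le (add_nonneg ha hb) with h | hc
  · have ha0 : a = 0 := by linarith
    have hb0 : b = 0 := by linarith
    simp [ha0, hb0]
  · have hc : 0 < a + b := hc
    have h2 : 1 - a / (a + b) = b / (a + b) := by field_simp; ring
    rw [h2]
    have h1 := key_log_ineq a (a + b) y ha hc hy0
    have h3 := key_log_ineq b (a + b) (1 - y) hb hc (by linarith)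
    nlinarith

theorem optimal_discriminator (n : ℕ) (p q : (Fin n → ℝ) → ℝ)
    (hp : Measurable p) (hq : Measurable q)
    (hp0 : ∀ x, 0 ≤ p x) (hq0 : ∀ x, 0 ≤ q x)
    (hp1 : ∫ x, p x = 1) (hq1 : ∫ x, q x = 1)
    (D : (Fin n → ℝ) → ℝ) (hD : Measurable D)
    (hD01 : ∀ x, D x ∈ Set.Ioo (0 : ℝ) 1)
    (hint1 : Integrable (fun x => p x * Real.log (D x)))
    (hint2 : Integrable (fun x => q x * Real.log (1 - D x)))
    (hint3 : Integrable (fun x => p x * Real.log (p x / (p x + q x))))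
    (hint4 : Integrable (fun x => q x * Real.log (1 - p x / (p x + q x)))) :
    (∫ x, p x * Real.log (D x)) + (∫ x, q x * Real.log (1 - D x)) ≤
      (∫ x, p x * Real.log (p x / (p x + q x))) +
        (∫ x, q x * Real.log (1 - p x / (p x + q x))) := by
  rw [← integral_add hint1 hint2, ← integral_add hint3 hint4]
  exact integral_mono (hint1.add hint2) (hint3.add hint4)
    (fun x => pointwise_ineq (p x) (q x) (D x) (hp0 x) (hq0 x) (hD01 x))
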